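/- Let G be a topological group, let U ⊆ G be a symmetric neighborhood of the identity containing no nontrivial discrete subgroup of G, and let H ≤ G be a discrete subgroup such that H ∩ (U·U) ⊆ U. Then H ∩ (U·U) = {1}. -/

import Mathlib

open scoped Pointwise

/-- If `U` is a symmetric neighborhood of the identity of a topological group `G` containing
no nontrivial discrete subgroup and `H` is a discrete subgroup such that `H ∩ U·U ⊆ U`,
then `H ∩ U·U = {1}`. -/
theorem inter_mul_self_eq_one_of_noDiscreteSubgroup
    (G : Type*) [Group G] [TopologicalSpace G] [IsTopologicalGroup G]
    (U : Set G) (hU : U ∈ nhds (1 : G)) (hsymm : U⁻¹ = U)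
    (hnodiscrete : ∀ K : Subgroup G, DiscreteTopology K → (K : Set G) ⊆ U → K = ⊥)
    (H : Subgroup G) (hdisc : DiscreteTopology H)
    (hsub : (H : Set G) ∩ (U * U) ⊆ U) :
    (H : Set G) ∩ (U * U) = {1} := by
  have h1U : (1 : G) ∈ U := mem_of_mem_nhds hU
  let K : Subgroup G :=
    { carrier := (H : Set G) ∩ (U * U)
      one_mem' := ⟨H.one_mem, by
        have := Set.mul_mem_mul h1U h1U
        simpa using this⟩
      mul_mem' := fun {a b} ha hb =>
        ⟨H.mul_mem ha.1 hb.1, Set.mul_mem_mul (hsub ha) (hsub hb)⟩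
      inv_mem' := fun {a} ha => by
        refine ⟨H.inv_mem ha.1, ?_⟩
        have haU : a ∈ U := hsub ha
        have : a⁻¹ ∈ U := by rw [← hsymm]; exact Set.inv_mem_inv.mpr haU
        simpa using Set.mul_mem_mul this h1U }
  have hKH : (K : Set G) ⊆ (H : Set G) := fun x hx => hx.1
  have hKdisc : DiscreteTopology K := DiscreteTopology.of_subset hdisc hKH
  have hKbot : K = ⊥ := hnodiscrete K hKdisc (fun x hx => hsub hx)
  have : (K : Set G) = {1} := by rw [hKbot]; rfl
  exact this
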